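/- For every integer n ≥ 1 and every real 0 < r ≤ 1, one has ∑_{i=1}^n i^r ≤ (r/(r+1)) · n^r (n+1)^r / ((n+1)^r − n^r). -/

import Mathlib

open Real Set

lemma auxH {s : ℝ} (hs0 : 0 ≤ s) (hs1 : s ≤ 1) {x : ℝ} (hx0 : 0 ≤ x) (hx1 : x ≤ 1/2) :
    2 * s * x ≤ (1 + x) ^ s - (1 - x) ^ s := by
  set f : ℝ → ℝ := fun y => (1 + y) ^ s - (1 - y) ^ s - 2 * s * y with hf
  have hmono : MonotoneOn f (Icc (0:ℝ) (1/2)) := by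
    apply monotoneOn_of_deriv_nonneg (convex_Icc _ _)
    · apply ContinuousOn.sub (ContinuousOn.sub ?_ ?_) (by fun_prop)
      · exact fun y hy => (Real.continuousAt_rpow_const _ _
          (Or.inl (by simp only [mem_Icc] at hy; nlinarith [hy.1]))).comp
          (by fun_prop) |>.continuousWithinAt
      · exact fun y hy => (Real.continuousAt_rpow_const _ _
          (Or.inl (by simp only [mem_Icc] at hy; nlinarith [hy.2]))).comp
          (by fun_prop) |>.continuousWithinAt
    · intro y hy
      rw [interior_Icc, mem_Ioo] at hy
      have h1 : (0:ℝ) < 1 + y := by linarith [hy.1]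
      have h2 : (0:ℝ) < 1 - y := by linarith [hy.2]
      have d1 : HasDerivAt (fun z : ℝ => (1 + z) ^ s) (1 * s * (1 + y) ^ (s - 1)) y :=
        ((hasDerivAt_id y).const_add 1).rpow_const (Or.inl h1.ne')
      have d2 : HasDerivAt (fun z : ℝ => (1 - z) ^ s) ((-1) * s * (1 - y) ^ (s - 1)) y :=
        ((hasDerivAt_id y).const_sub 1).rpow_const (Or.inl h2.ne')
      have d3 : HasDerivAt f (1 * s * (1 + y) ^ (s - 1) - (-1) * s * (1 - y) ^ (s - 1)
          - 2 * s) y := by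
        simpa using (d1.fun_sub d2).fun_sub ((hasDerivAt_id y).const_mul (2 * s))
      exact d3.differentiableAt.differentiableWithinAt
    · intro y hy
      rw [interior_Icc, mem_Ioo] at hy
      have h1 : (0:ℝ) < 1 + y := by linarith [hy.1]
      have h2 : (0:ℝ) < 1 - y := by linarith [hy.2]
      have d1 : HasDerivAt (fun z : ℝ => (1 + z) ^ s) (1 * s * (1 + y) ^ (s - 1)) y :=
        ((hasDerivAt_id y).const_add 1).rpow_const (Or.inl h1.ne')
      have d2 : HasDerivAt (fun z : ℝ => (1 - z) ^ s) ((-1) * s * (1 - y) ^ (s - 1)) y :=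
        ((hasDerivAt_id y).const_sub 1).rpow_const (Or.inl h2.ne')
      have d3 : HasDerivAt f (1 * s * (1 + y) ^ (s - 1) - (-1) * s * (1 - y) ^ (s - 1)
          - 2 * s) y := by
        simpa using (d1.fun_sub d2).fun_sub ((hasDerivAt_id y).const_mul (2 * s))
      rw [d3.deriv]
      -- need : 0 ≤ s * (1+y)^(s-1) + s * (1-y)^(s-1) - 2*s
      have key : (2:ℝ) ≤ (1 + y) ^ (s - 1) + (1 - y) ^ (s - 1) := by
        have hprod : (1:ℝ) ≤ (1 + y) ^ (s - 1) * (1 - y) ^ (s - 1) := by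
          rw [← Real.mul_rpow h1.le h2.le]
          apply Real.one_le_rpow_of_pos_of_le_one_of_nonpos (by nlinarith) (by nlinarith)
            (by linarith)
        have ha := Real.rpow_pos_of_pos h1 (s - 1)
        have hb := Real.rpow_pos_of_pos h2 (s - 1)
        nlinarith [sq_nonneg ((1 + y) ^ (s - 1) - (1 - y) ^ (s - 1))]
      nlinarith
  have h0 : f 0 = 0 := by simp [hf]
  have := hmono (show (0:ℝ) ∈ Icc (0:ℝ) (1/2) by constructor <;> norm_num)
    (show x ∈ Icc (0:ℝ) (1/2) from ⟨hx0, hx1⟩) hx0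
  rw [h0] at this
  simp only [hf] at this
  linarith

lemma auxG {r : ℝ} (hr0 : 0 < r) (hr1 : r ≤ 1) {x : ℝ} (hx0 : 0 ≤ x) (hx1 : x ≤ 1/2) :
    (1 - r) * ((1 - (1 - x) ^ r) * ((1 + x) ^ r - 1)) ≤
      r * (2 - (1 - x) ^ r - (1 + x) ^ r) := by
  set f : ℝ → ℝ := fun y => r * (2 - (1 - y) ^ r - (1 + y) ^ r)
      - (1 - r) * ((1 - (1 - y) ^ r) * ((1 + y) ^ r - 1)) with hf
  have hderiv : ∀ y : ℝ, 0 < y → y < 1/2 → HasDerivAt f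
      (r * (0 - (-1) * r * (1 - y) ^ (r - 1) - 1 * r * (1 + y) ^ (r - 1))
        - (1 - r) * ((0 - (-1) * r * (1 - y) ^ (r - 1)) * ((1 + y) ^ r - 1)
          + (1 - (1 - y) ^ r) * (1 * r * (1 + y) ^ (r - 1)))) y := by
    intro y hy1 hy2
    have h1 : (0:ℝ) < 1 + y := by linarith
    have h2 : (0:ℝ) < 1 - y := by linarith
    have d1 : HasDerivAt (fun z : ℝ => (1 + z) ^ r) (1 * r * (1 + y) ^ (r - 1)) y :=
      ((hasDerivAt_id y).const_add 1).rpow_const (Or.inl h1.ne')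
    have d2 : HasDerivAt (fun z : ℝ => (1 - z) ^ r) ((-1) * r * (1 - y) ^ (r - 1)) y :=
      ((hasDerivAt_id y).const_sub 1).rpow_const (Or.inl h2.ne')
    have := ((((d2.const_sub 2).fun_sub d1).const_mul r).fun_sub
      ((((d2.const_sub 1).fun_mul (d1.sub_const 1))).const_mul (1 - r)))
    exact this.congr_deriv (by ring)
  have hmono : MonotoneOn f (Icc (0:ℝ) (1/2)) := by
    apply monotoneOn_of_deriv_nonneg (convex_Icc _ _)
    · have c1 : ContinuousOn (fun y : ℝ => (1 + y) ^ r) (Icc (0:ℝ) (1/2)) :=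
        fun y hy => (Real.continuousAt_rpow_const _ _
          (Or.inl (by simp only [mem_Icc] at hy; nlinarith [hy.1]))).comp
          (by fun_prop) |>.continuousWithinAt
      have c2 : ContinuousOn (fun y : ℝ => (1 - y) ^ r) (Icc (0:ℝ) (1/2)) :=
        fun y hy => (Real.continuousAt_rpow_const _ _
          (Or.inl (by simp only [mem_Icc] at hy; nlinarith [hy.2]))).comp
          (by fun_prop) |>.continuousWithinAt
      exact (continuousOn_const.mul ((continuousOn_const.sub c2).sub c1)).sub
        (continuousOn_const.mul ((continuousOn_const.sub c2).mul
          (c1.sub continuousOn_const)))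
    · intro y hy
      rw [interior_Icc, mem_Ioo] at hy
      exact (hderiv y hy.1 hy.2).differentiableAt.differentiableWithinAt
    · intro y hy
      rw [interior_Icc, mem_Ioo] at hy
      rw [(hderiv y hy.1 hy.2).deriv]
      have h1 : (0:ℝ) < 1 + y := by linarith [hy.1]
      have h2 : (0:ℝ) < 1 - y := by linarith [hy.2]
      set P := (1 - y) ^ r with hP
      set Q := (1 + y) ^ r with hQ
      set p := (1 - y) ^ (r - 1) with hp
      set q := (1 + y) ^ (r - 1) with hq
      have hPpos : 0 < P := Real.rpow_pos_of_pos h2 r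
      have hQpos : 0 < Q := Real.rpow_pos_of_pos h1 r
      have hppos : 0 < p := Real.rpow_pos_of_pos h2 (r - 1)
      have hqpos : 0 < q := Real.rpow_pos_of_pos h1 (r - 1)
      have e1 : p * (1 - y) = P := by
        rw [hp, hP, ← Real.rpow_add_one h2.ne' (r - 1)]; norm_num
      have e2 : q * (1 + y) = Q := by
        rw [hq, hQ, ← Real.rpow_add_one h1.ne' (r - 1)]; norm_num
      have e3 : (1 + y) ^ (1 - r) * Q = 1 + y := by
        rw [hQ, ← Real.rpow_add h1, sub_add_cancel, Real.rpow_one]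
      have e4 : (1 - y) ^ (1 - r) * P = 1 - y := by
        rw [hP, ← Real.rpow_add h2, sub_add_cancel, Real.rpow_one]
      have H := auxH (by linarith : (0:ℝ) ≤ 1 - r) (by linarith : (1:ℝ) - r ≤ 1)
        hy.1.le hy.2.le
      -- multiply H by P*Q > 0 : 2(1-r)y*P*Q ≤ (1+y)*P - (1-y)*Q
      have H2 : 2 * (1 - r) * y * (P * Q) ≤ (1 + y) * P - (1 - y) * Q := by
        have := mul_le_mul_of_nonneg_right H (mul_pos hPpos hQpos).le
        calc 2 * (1 - r) * y * (P * Q) ≤ ((1 + y) ^ (1 - r) - (1 - y) ^ (1 - r)) * (P * Q) :=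
              this
          _ = (1 + y) * P - (1 - y) * Q := by
              rw [sub_mul]
              rw [show (1 + y) ^ (1 - r) * (P * Q) = ((1 + y) ^ (1 - r) * Q) * P by ring,
                show (1 - y) ^ (1 - r) * (P * Q) = ((1 - y) ^ (1 - r) * P) * Q by ring, e3, e4]
      -- goal : 0 ≤ r * (p*r - q*r ... ) etc ; multiply by (1-y)(1+y)
      have hc : (0:ℝ) < (1 - y) * (1 + y) := mul_pos h2 h1
      rw [← mul_nonneg_iff_of_pos_left hc]
      have expand : (1 - y) * (1 + y) *
          (r * (0 - (-1) * r * p - 1 * r * q)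
            - (1 - r) * ((0 - (-1) * r * p) * (Q - 1) + (1 - P) * (1 * r * q)))
          = r * ((1 + y) * ((1 - (1 - r) * Q) * (p * (1 - y)))
            - (1 - y) * ((1 - (1 - r) * P) * (q * (1 + y)))) := by ring
      rw [expand, e1, e2]
      have final : (1 + y) * ((1 - (1 - r) * Q) * P) - (1 - y) * ((1 - (1 - r) * P) * Q)
          = ((1 + y) * P - (1 - y) * Q) - 2 * (1 - r) * y * (P * Q) := by ring
      rw [final]
      have := sub_nonneg.mpr H2
      positivity
  have h0 : f 0 = 0 := by norm_num [hf]
  have hle := hmono (show (0:ℝ) ∈ Icc (0:ℝ) (1/2) by constructor <;> norm_num)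
    (show x ∈ Icc (0:ℝ) (1/2) from ⟨hx0, hx1⟩) hx0
  rw [h0] at hle
  simp only [hf] at hle
  linarith

lemma auxKey {r : ℝ} (hr0 : 0 < r) (hr1 : r ≤ 1) {N : ℝ} (hN : 1 ≤ N) :
    (N + 1) ^ r * (N ^ r + (N + 2) ^ r) ≤
      (r + 1) * ((N + 1) ^ r) ^ 2 + (1 - r) * (N ^ r * (N + 2) ^ r) := by
  have hN1 : (0:ℝ) < N + 1 := by linarith
  set x := 1 / (N + 1) with hx
  have hx0 : 0 ≤ x := by positivity
  have hx1 : x ≤ 1/2 := by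
    rw [hx, div_le_div_iff₀ hN1 (by norm_num)]; linarith
  have hG := auxG hr0 hr1 hx0 hx1
  set b := (N + 1) ^ r with hb
  have hbpos : 0 < b := Real.rpow_pos_of_pos hN1 r
  have eP : (1 - x) ^ r * b = N ^ r := by
    rw [hb, ← Real.mul_rpow (by rw [hx]; rw [sub_nonneg, div_le_one hN1]; linarith) hN1.le]
    congr 1
    rw [hx]
    field_simp
    ring
  have eQ : (1 + x) ^ r * b = (N + 2) ^ r := by
    rw [hb, ← Real.mul_rpow (by positivity) hN1.le]
    congr 1
    rw [hx]
    field_simp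
    ring
  have hG2 := mul_le_mul_of_nonneg_right hG (mul_pos hbpos hbpos).le
  rw [show (1 - r) * ((1 - (1 - x) ^ r) * ((1 + x) ^ r - 1)) * (b * b)
      = (1 - r) * ((b - (1 - x) ^ r * b) * ((1 + x) ^ r * b - b)) by ring,
    show r * (2 - (1 - x) ^ r - (1 + x) ^ r) * (b * b)
      = r * (2 * b ^ 2 - ((1 - x) ^ r * b) * b - ((1 + x) ^ r * b) * b) by ring,
    eP, eQ] at hG2
  nlinarith [hG2]

lemma auxStep {r : ℝ} (hr0 : 0 < r) (hr1 : r ≤ 1) {N : ℝ} (hN : 1 ≤ N) :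
    (r / (r + 1)) * (N ^ r * (N + 1) ^ r / ((N + 1) ^ r - N ^ r)) + (N + 1) ^ r ≤
      (r / (r + 1)) * ((N + 1) ^ r * (N + 2) ^ r / ((N + 2) ^ r - (N + 1) ^ r)) := by
  have h0N : (0:ℝ) < N := by linarith
  set a := N ^ r with ha
  set b := (N + 1) ^ r with hb
  set c := (N + 2) ^ r with hc
  have hapos : 0 < a := Real.rpow_pos_of_pos h0N r
  have hbpos : 0 < b := Real.rpow_pos_of_pos (by linarith) r
  have hba : 0 < b - a := by
    rw [sub_pos, ha, hb]; exact Real.rpow_lt_rpow h0N.le (by linarith) hr0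
  have hcb : 0 < c - b := by
    rw [sub_pos, hb, hc]; exact Real.rpow_lt_rpow (by linarith) (by linarith) hr0
  have hr1' : (0:ℝ) < r + 1 := by linarith
  have key := auxKey hr0 hr1 hN
  rw [← sub_nonneg]
  have heq : (r / (r + 1)) * (b * c / (c - b)) - ((r / (r + 1)) * (a * b / (b - a)) + b)
      = (b * ((r + 1) * b ^ 2 + (1 - r) * (a * c) - b * (a + c)))
        / ((r + 1) * ((b - a) * (c - b))) := by
    field_simp
    ring
  rw [heq]
  apply div_nonneg _ (by positivity)
  have := sub_nonneg.mpr key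
  positivity

/-- Upper bound of Lemma 1: for `0 < r ≤ 1`,
`∑_{i=1}^n i^r ≤ (r/(r+1)) n^r (n+1)^r / ((n+1)^r - n^r)`. -/
theorem sum_pow_upper_bound (n : ℕ) (hn : 1 ≤ n) (r : ℝ) (hr0 : 0 < r) (hr1 : r ≤ 1) :
    ∑ i ∈ Finset.Icc 1 n, (i : ℝ) ^ r ≤
      (r / (r + 1)) * ((n : ℝ) ^ r * ((n : ℝ) + 1) ^ r /
        (((n : ℝ) + 1) ^ r - (n : ℝ) ^ r)) := by
  induction n, hn using Nat.le_induction with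
  | base =>
    norm_num [Real.one_rpow]
    have h2 : (1:ℝ) < (2:ℝ) ^ r := Real.one_lt_rpow_iff_of_pos (by norm_num) |>.mpr
      (Or.inl ⟨by norm_num, hr0⟩)
    have hbern : (2:ℝ) ^ r ≤ 1 + r := by
      have := rpow_one_add_le_one_add_mul_self (s := 1) (by norm_num) hr0.le hr1
      norm_num at this
      linarith
    rw [div_mul_div_comm, le_div_iff₀ (by nlinarith)]
    nlinarith
  | succ m hm ih =>
    rw [Finset.sum_Icc_succ_top (by omega : 1 ≤ m + 1)]
    push_cast
    calc ∑ i ∈ Finset.Icc 1 m, (i : ℝ) ^ r + ((m : ℝ) + 1) ^ r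
        ≤ (r / (r + 1)) * ((m : ℝ) ^ r * ((m : ℝ) + 1) ^ r /
            (((m : ℝ) + 1) ^ r - (m : ℝ) ^ r)) + ((m : ℝ) + 1) ^ r := by linarith
      _ ≤ (r / (r + 1)) * (((m : ℝ) + 1) ^ r * ((m : ℝ) + 2) ^ r /
            (((m : ℝ) + 2) ^ r - ((m : ℝ) + 1) ^ r)) :=
          auxStep hr0 hr1 (by exact_mod_cast hm)
      _ = (r / (r + 1)) * (((m : ℝ) + 1) ^ r * (((m : ℝ) + 1) + 1) ^ r /
            ((((m : ℝ) + 1) + 1) ^ r - ((m : ℝ) + 1) ^ r)) := by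
          rw [show ((m:ℝ) + 1) + 1 = (m:ℝ) + 2 by ring]
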